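/- Let r > 0, let α ∈ (0, 2π/3), and let x = r(cos(α/2), sin(α/2)) and y = r(cos(α/2), −sin(α/2)) be two points on the circle of radius r centered at the origin, subtending angle α at the origin. Then there exists a point p ∈ ℝ² such that |p| + |p − x| + |p − y| < 2r. -/

import Mathlib

open Real

noncomputable section

abbrev E2 := EuclideanSpace ℝ (Fin 2)

lemma norm_single_pair (a b : ℝ) :
    ‖(EuclideanSpace.single 0 a + EuclideanSpace.single 1 b : E2)‖ =
      Real.sqrt (a ^ 2 + b ^ 2) := by
  rw [EuclideanSpace.norm_eq, Fin.sum_univ_two]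
  simp [EuclideanSpace.single_apply, sq_abs]

theorem fermat_torricelli_isosceles (r α : ℝ) (hr : 0 < r)
    (hα : α ∈ Set.Ioo (0 : ℝ) (2 * π / 3)) :
    ∃ p : E2,
      ‖p‖ +
        ‖p - (EuclideanSpace.single 0 (r * Real.cos (α / 2)) +
          EuclideanSpace.single 1 (r * Real.sin (α / 2)))‖ +
        ‖p - (EuclideanSpace.single 0 (r * Real.cos (α / 2)) +
          EuclideanSpace.single 1 (-(r * Real.sin (α / 2))))‖ < 2 * r := by
  obtain ⟨hα0, hα1⟩ := hα
  set θ := α / 2 with hθ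
  have hθ0 : 0 < θ := by positivity
  have hθ1 : θ < π / 3 := by rw [hθ]; linarith
  have hπ : 0 < π := Real.pi_pos
  set c := r * Real.cos θ with hc
  set s := r * Real.sin θ with hs
  have hsin : 0 < Real.sin θ := Real.sin_pos_of_pos_of_lt_pi hθ0 (by linarith)
  have hcospos : 0 < Real.cos θ := Real.cos_pos_of_mem_Ioo ⟨by linarith, by linarith⟩
  have hsqrt3 : (0:ℝ) < Real.sqrt 3 := Real.sqrt_pos.mpr (by norm_num)
  have hsq3 : Real.sqrt 3 ^ 2 = 3 := Real.sq_sqrt (by norm_num)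
  have htan : Real.sin θ < Real.sqrt 3 * Real.cos θ := by
    have h := Real.tan_lt_tan_of_nonneg_of_lt_pi_div_two hθ0.le (by linarith) hθ1
    rw [Real.tan_pi_div_three, Real.tan_eq_sin_div_cos, div_lt_iff₀ hcospos] at h
    exact h
  -- Fermat point on the axis
  set t := c - s / Real.sqrt 3 with ht
  have hspos : 0 < s := by positivity
  have htpos : 0 < t := by
    rw [ht, hc, hs, sub_pos, div_lt_iff₀ hsqrt3]
    calc r * Real.sin θ < r * (Real.sqrt 3 * Real.cos θ) := by
          exact mul_lt_mul_of_pos_left htan hr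
      _ = r * Real.cos θ * Real.sqrt 3 := by ring
  refine ⟨EuclideanSpace.single 0 t, ?_⟩
  have h1 : ‖(EuclideanSpace.single 0 t : E2)‖ = t := by
    rw [EuclideanSpace.norm_single, Real.norm_eq_abs, abs_of_pos htpos]
  have key : ∀ b : ℝ, (EuclideanSpace.single 0 t : E2) -
      (EuclideanSpace.single 0 c + EuclideanSpace.single 1 b) =
      EuclideanSpace.single 0 (t - c) + EuclideanSpace.single 1 (-b) := by
    intro b
    ext i
    fin_cases i <;> simp [EuclideanSpace.single_apply]
  have hside : Real.sqrt ((t - c) ^ 2 + s ^ 2) = 2 * s / Real.sqrt 3 := by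
    have htc : (t - c) ^ 2 = s ^ 2 / 3 := by
      rw [ht]
      field_simp
      rw [hsq3]; ring
    rw [htc]
    rw [show s ^ 2 / 3 + s ^ 2 = (2 * s / Real.sqrt 3) ^ 2 by
      rw [div_pow, hsq3]; ring]
    exact Real.sqrt_sq (by positivity)
  rw [h1, key, key, norm_single_pair, norm_single_pair, neg_neg, hside,
    show (t - c) ^ 2 + (-s) ^ 2 = (t - c) ^ 2 + s ^ 2 by ring, hside]
  -- t + 4s/√3 = c + √3 s = 2 r cos(θ - π/3) < 2r
  have hsum : t + 2 * s / Real.sqrt 3 + 2 * s / Real.sqrt 3 = c + Real.sqrt 3 * s := by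
    rw [ht]
    field_simp
    nlinarith [hsq3]
  rw [hsum]
  have hcoslt : Real.cos (θ - π / 3) < 1 := by
    have : Real.cos (π / 3 - θ) < Real.cos 0 :=
      Real.cos_lt_cos_of_nonneg_of_le_pi le_rfl (by linarith) (by linarith)
    rw [Real.cos_zero] at this
    rwa [show θ - π / 3 = -(π / 3 - θ) by ring, Real.cos_neg]
  have hexp : c + Real.sqrt 3 * s = 2 * r * Real.cos (θ - π / 3) := by
    rw [hc, hs, Real.cos_sub, Real.cos_pi_div_three, Real.sin_pi_div_three]
    ring
  rw [hexp]
  calc 2 * r * Real.cos (θ - π / 3) < 2 * r * 1 := by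
        exact mul_lt_mul_of_pos_left hcoslt (by linarith)
    _ = 2 * r := by ring
  
end
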